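/- Let Σ be a ranked alphabet and B=(B,⊕,⊗,0,1) a strong bimonoid. The following two statements are equivalent: (A) if Σ≠Σ^(0), then B is right-distributive, and if Σ≠Σ^(0)∪Σ^(1), then B is left-distributive; (B) for each (Σ,B)-weighted tree automaton 𝒜, ⟦𝒜⟧_run = ⟦𝒜⟧_init. In particular, if B is a semiring, then ⟦𝒜⟧_init=⟦𝒜⟧_run for each (Σ,B)-wta 𝒜. -/

import Mathlib

/-- A strong bimonoid: `(B,+,0)` a commutative monoid, `(B,*,1)` a monoid,
and `0` annihilating for `*`. -/
class StrongBimonoid (B : Type*) extends AddCommMonoid B, MonoidWithZero B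

section Defs

variable {B : Type*} [StrongBimonoid B]

/-- The closure `⟨A⟩_{⊕,⊗,0,1}` of a subset `A`: the smallest subset of `B`
containing `A ∪ {0,1}` and closed under `+` and `*`. -/
inductive SBClosure (A : Set B) : B → Prop
  | base {a : B} : a ∈ A → SBClosure A a
  | zero : SBClosure A 0
  | one : SBClosure A 1
  | add {a b : B} : SBClosure A a → SBClosure A b → SBClosure A (a + b)
  | mul {a b : B} : SBClosure A a → SBClosure A b → SBClosure A (a * b)

/-- `B` is locally finite if the closure of each finite subset is finite. -/
def SBLocallyFinite (B : Type*) [StrongBimonoid B] : Prop :=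
  ∀ A : Set B, A.Finite → {b : B | SBClosure A b}.Finite

/-- The weak closure `wcl(A)`: the smallest subset containing `A ∪ {0,1}` closed
under addition and under multiplication on the right by elements of `A`. -/
inductive WeakClosure (A : Set B) : B → Prop
  | base {a : B} : a ∈ A → WeakClosure A a
  | zero : WeakClosure A 0
  | one : WeakClosure A 1
  | add {b b' : B} : WeakClosure A b → WeakClosure A b' → WeakClosure A (b + b')
  | mulr {b a : B} : WeakClosure A b → a ∈ A → WeakClosure A (b * a)

/-- `B` is weakly locally finite if the weak closure of each finite subset is finite. -/
def WeaklyLocallyFinite (B : Type*) [StrongBimonoid B] : Prop :=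
  ∀ A : Set B, A.Finite → {b : B | WeakClosure A b}.Finite

/-- `B` is additively locally finite if each finitely generated submonoid of `(B,+,0)` is finite. -/
def AddLocallyFinite (B : Type*) [StrongBimonoid B] : Prop :=
  ∀ A : Set B, A.Finite → ((AddSubmonoid.closure A : AddSubmonoid B) : Set B).Finite

/-- `B` is multiplicatively locally finite if each finitely generated submonoid of `(B,*,1)` is finite. -/
def MulLocallyFinite (B : Type*) [StrongBimonoid B] : Prop :=
  ∀ A : Set B, A.Finite → ((Submonoid.closure A : Submonoid B) : Set B).Finite

/-- `B` is bi-locally finite if it is additively and multiplicatively locally finite. -/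
def BiLocallyFinite (B : Type*) [StrongBimonoid B] : Prop :=
  AddLocallyFinite B ∧ MulLocallyFinite B

/-- `B` is almost idempotent if `b + b + b = b + b` for all `b`. -/
def AlmostIdempotent (B : Type*) [StrongBimonoid B] : Prop :=
  ∀ b : B, b + b + b = b + b

/-- right-distributivity -/
def SBRightDistributive (B : Type*) [StrongBimonoid B] : Prop :=
  ∀ a b c : B, (a + b) * c = a * c + b * c

/-- left-distributivity -/
def SBLeftDistributive (B : Type*) [StrongBimonoid B] : Prop :=
  ∀ a b c : B, a * (b + c) = a * b + a * c

end Defs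

/-- A ranked alphabet: a finite nonempty set of symbols with a rank map,
having at least one nullary symbol. -/
structure RankedAlphabet where
  symb : Type
  fintype_symb : Fintype symb
  nonempty_symb : Nonempty symb
  rk : symb → ℕ
  exists_nullary : ∃ σ, rk σ = 0

attribute [instance] RankedAlphabet.fintype_symb RankedAlphabet.nonempty_symb

/-- Trees (ground terms) over a ranked alphabet. -/
inductive RTree (S : RankedAlphabet) : Type
  | node (σ : S.symb) (ts : Fin (S.rk σ) → RTree S) : RTree S

/-- A weighted tree automaton over the ranked alphabet `S` and the strong bimonoid `B`. -/
structure WTA (S : RankedAlphabet) (B : Type) [StrongBimonoid B] where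
  Q : Type
  fintypeQ : Fintype Q
  nonemptyQ : Nonempty Q
  δ : (σ : S.symb) → (Fin (S.rk σ) → Q) → Q → B
  F : Q → B

attribute [instance] WTA.fintypeQ WTA.nonemptyQ

variable {S : RankedAlphabet} {B : Type} [StrongBimonoid B]

/-- The vector `h_𝒜(t) ∈ B^Q`:
`h_𝒜(σ(t_1,…,t_k))_q = ⊕_{q_1⋯q_k ∈ Q^k} (⊗_i h_𝒜(t_i)_{q_i}) ⊗ δ_k(q_1⋯q_k,σ,q)`. -/
def WTA.h (M : WTA S B) : RTree S → M.Q → B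
  | .node σ ts => fun q =>
      ∑ qs : Fin (S.rk σ) → M.Q,
        (((List.finRange (S.rk σ)).map (fun i => M.h (ts i) (qs i))).prod) * M.δ σ qs q

/-- The initial algebra semantics `⟦𝒜⟧_init(t) = ⊕_{q ∈ Q} h_𝒜(t)_q ⊗ F_q`. -/
noncomputable def WTA.initSem (M : WTA S B) (t : RTree S) : B :=
  ∑ q, M.h t q * M.F q

/-- The positions of a tree (as lists of natural numbers). -/
def RTree.pos : RTree S → Finset (List ℕ)
  | .node _ ts =>
      insert [] (Finset.univ.biUnion fun i => ((ts i).pos).image (fun w => (i : ℕ) :: w))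

/-- The weight of a run `ρ` (given as a total map on positions) on a tree:
`wt(σ(t_1,…,t_k),ρ) = (⊗_i wt(t_i,ρ_i)) ⊗ δ_k(ρ(1)⋯ρ(k),σ,ρ(ε))`. -/
def WTA.wt (M : WTA S B) : RTree S → (List ℕ → M.Q) → B
  | .node σ ts => fun ρ =>
      (((List.finRange (S.rk σ)).map
          (fun i => M.wt (ts i) (fun w => ρ ((i : ℕ) :: w)))).prod)
        * M.δ σ (fun i => ρ [(i : ℕ)]) (ρ [])

/-- Extend a run, defined on the positions of `t`, to a total map on `List ℕ`. -/
noncomputable def WTA.extend (M : WTA S B) (t : RTree S) (ρ : ↑(t.pos) → M.Q) :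
    List ℕ → M.Q :=
  fun w => if h : w ∈ t.pos then ρ ⟨w, h⟩ else Classical.choice M.nonemptyQ

/-- The run semantics `⟦𝒜⟧_run(t) = ⊕_{ρ run of 𝒜 on t} wt(t,ρ) ⊗ F_{ρ(ε)}`. -/
noncomputable def WTA.runSem (M : WTA S B) (t : RTree S) : B :=
  ∑ ρ : (↑(t.pos) → M.Q), M.wt t (M.extend t ρ) * M.F (M.extend t ρ [])

section Infra

variable {S : RankedAlphabet} {B : Type} [StrongBimonoid B]

lemma sum_mul_of_rdist (hr : SBRightDistributive B) {ι : Type*} (s : Finset ι)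
    (f : ι → B) (c : B) : (∑ x ∈ s, f x) * c = ∑ x ∈ s, f x * c := by
  induction s using Finset.cons_induction with
  | empty => simp
  | cons a s ha ih => rw [Finset.sum_cons, Finset.sum_cons, hr, ih]

lemma mul_sum_of_ldist (hl : SBLeftDistributive B) {ι : Type*} (s : Finset ι)
    (f : ι → B) (c : B) : c * (∑ x ∈ s, f x) = ∑ x ∈ s, c * f x := by
  induction s using Finset.cons_induction with
  | empty => simp
  | cons a s ha ih => rw [Finset.sum_cons, Finset.sum_cons, hl, ih]

lemma list_prod_succ {k : ℕ} (g : Fin (k + 1) → B) :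
    ((List.finRange (k + 1)).map g).prod
      = g 0 * ((List.finRange k).map (fun i => g i.succ)).prod := by
  rw [List.finRange_succ, List.map_cons, List.map_map, List.prod_cons]
  rfl

lemma list_prod_eq_one {k : ℕ} (g : Fin k → B) (hg : ∀ i, g i = 1) :
    ((List.finRange k).map g).prod = 1 := by
  apply List.prod_eq_one
  intro x hx
  obtain ⟨i, -, rfl⟩ := List.mem_map.mp hx
  exact hg i

lemma list_prod_eq_first {k : ℕ} (hk : 0 < k) (g : Fin k → B)
    (hg : ∀ i : Fin k, (i : ℕ) ≠ 0 → g i = 1) :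
    ((List.finRange k).map g).prod = g ⟨0, hk⟩ := by
  obtain ⟨m, rfl⟩ : ∃ m, k = m + 1 := ⟨k - 1, by omega⟩
  rw [list_prod_succ, list_prod_eq_one (fun i => g i.succ) (fun i => hg i.succ (by simp)),
    mul_one]
  rfl

lemma list_prod_eq_first_two {k : ℕ} (hk : 2 ≤ k) (g : Fin k → B)
    (hg : ∀ i : Fin k, 1 < (i : ℕ) → g i = 1) :
    ((List.finRange k).map g).prod = g ⟨0, by omega⟩ * g ⟨1, by omega⟩ := by
  obtain ⟨m, rfl⟩ : ∃ m, k = m + 2 := ⟨k - 2, by omega⟩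
  rw [list_prod_succ, list_prod_succ,
    list_prod_eq_one (fun i => g i.succ.succ) (fun i => hg i.succ.succ (by simp)), mul_one]
  rfl

lemma list_prod_ite {k : ℕ} (c : Fin k → Prop) [DecidablePred c] (w : Fin k → B) :
    ((List.finRange k).map (fun i => if c i then w i else 0)).prod
      = if ∀ i, c i then ((List.finRange k).map w).prod else 0 := by
  by_cases h : ∀ i, c i
  · rw [if_pos h]
    congr 1
    exact List.map_congr_left (fun i _ => if_pos (h i))
  · rw [if_neg h]
    push_neg at h
    obtain ⟨i, hi⟩ := h
    apply List.prod_eq_zero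
    exact List.mem_map.mpr ⟨i, List.mem_finRange i, by simp [hi]⟩

/-- product of sums = sum of products, under conditional distributivity. -/
lemma prod_sum_expand : ∀ (k : ℕ), (1 ≤ k → SBRightDistributive B) →
    (2 ≤ k → SBLeftDistributive B) →
    ∀ (α : Fin k → Type) (_ : ∀ i, Fintype (α i)) (f : ∀ i, α i → B),
    ((List.finRange k).map (fun i => ∑ x : α i, f i x)).prod
      = ∑ xs : ∀ i, α i, ((List.finRange k).map (fun i => f i (xs i))).prod := by
  intro k
  induction k with
  | zero =>
    intro _ _ α _ f
    simp [List.finRange_zero]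
  | succ k ih =>
    intro hr hl α hα f
    rw [list_prod_succ]
    rw [ih (fun h => hr (by omega)) (fun h => hl (by omega)) (fun i => α i.succ)
      (fun i => hα i.succ) (fun i x => f i.succ x)]
    rw [← Equiv.sum_comp (Fin.consEquiv α) (fun xs => ((List.finRange (k+1)).map
      (fun i => f i (xs i))).prod)]
    rw [Fintype.sum_prod_type]
    have hcons : ∀ (x : α 0) (xs : ∀ i : Fin k, α i.succ),
        ((List.finRange (k+1)).map (fun i => f i (Fin.consEquiv α (x, xs) i))).prod
          = f 0 x * ((List.finRange k).map (fun i => f i.succ (xs i))).prod := by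
      intro x xs
      rw [list_prod_succ]
      rfl
    rcases Nat.eq_zero_or_pos k with hk | hk
    · subst hk
      simp only [hcons]
      simp [List.finRange_zero, Fintype.sum_unique]
    · have hrd := hr (by omega)
      have hld := hl (by omega)
      rw [sum_mul_of_rdist hrd]
      apply Finset.sum_congr rfl
      intro x _
      rw [mul_sum_of_ldist hld]
      apply Finset.sum_congr rfl
      intro xs _
      exact (hcons x xs).symm

end Infra

section Infra2

variable {S : RankedAlphabet} {B : Type} [StrongBimonoid B]

lemma RTree.mem_pos_nil (t : RTree S) : [] ∈ t.pos := by
  cases t with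
  | node σ ts => simp [RTree.pos]

lemma RTree.mem_pos_cons {σ : S.symb} {ts : Fin (S.rk σ) → RTree S} (i : Fin (S.rk σ))
    {w : List ℕ} : ((i : ℕ) :: w) ∈ (RTree.node σ ts).pos ↔ w ∈ (ts i).pos := by
  simp only [RTree.pos, Finset.mem_insert, Finset.mem_biUnion, Finset.mem_univ,
    Finset.mem_image, true_and]
  constructor
  · rintro (h | ⟨j, v, hv, hj⟩)
    · exact absurd h (by simp)
    · obtain ⟨h1, h2⟩ := List.cons_eq_cons.mp hj
      subst h2
      obtain rfl : j = i := Fin.ext h1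
      exact hv
  · intro h
    exact Or.inr ⟨i, w, h, rfl⟩

lemma RTree.pos_cases {σ : S.symb} {ts : Fin (S.rk σ) → RTree S} {w : List ℕ}
    (hw : w ∈ (RTree.node σ ts).pos) :
    w = [] ∨ ∃ (i : Fin (S.rk σ)) (v : List ℕ), v ∈ (ts i).pos ∧ w = (i : ℕ) :: v := by
  simp only [RTree.pos, Finset.mem_insert, Finset.mem_biUnion, Finset.mem_univ,
    Finset.mem_image, true_and] at hw
  rcases hw with h | ⟨j, v, hv, hj⟩
  · exact Or.inl h
  · exact Or.inr ⟨j, v, hv, hj.symm⟩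

/-- glue a root state and a family of runs on subtrees into a run on the whole tree. -/
noncomputable def WTA.glue (M : WTA S B) (σ : S.symb) (ts : Fin (S.rk σ) → RTree S)
    (q : M.Q) (ρs : ∀ i, (↑((ts i).pos) → M.Q)) : ↑((RTree.node σ ts).pos) → M.Q :=
  fun w =>
    match w with
    | ⟨[], _⟩ => q
    | ⟨i :: v, _⟩ =>
      if h : ∃ hi : i < S.rk σ, v ∈ (ts ⟨i, hi⟩).pos then
        ρs ⟨i, h.choose⟩ ⟨v, h.choose_spec⟩
      else q

lemma WTA.glue_nil (M : WTA S B) (σ : S.symb) (ts : Fin (S.rk σ) → RTree S)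
    (q : M.Q) (ρs : ∀ i, (↑((ts i).pos) → M.Q)) (h) :
    M.glue σ ts q ρs ⟨[], h⟩ = q := rfl

lemma WTA.glue_cons (M : WTA S B) (σ : S.symb) (ts : Fin (S.rk σ) → RTree S)
    (q : M.Q) (ρs : ∀ i, (↑((ts i).pos) → M.Q)) (i : Fin (S.rk σ)) (v : List ℕ)
    (hv : v ∈ (ts i).pos) (h) :
    M.glue σ ts q ρs ⟨(i : ℕ) :: v, h⟩ = ρs i ⟨v, hv⟩ := by
  have hex : ∃ hi : (i : ℕ) < S.rk σ, v ∈ (ts ⟨(i : ℕ), hi⟩).pos := ⟨i.isLt, by simpa using hv⟩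
  simp only [WTA.glue, dif_pos hex]

/-- runs on `node σ ts` are in bijection with pairs of a root state and a family of
runs on the subtrees. -/
noncomputable def WTA.runEquiv (M : WTA S B) (σ : S.symb) (ts : Fin (S.rk σ) → RTree S) :
    (↑((RTree.node σ ts).pos) → M.Q) ≃ M.Q × (∀ i, (↑((ts i).pos) → M.Q)) where
  toFun ρ := (ρ ⟨[], RTree.mem_pos_nil _⟩,
    fun i v => ρ ⟨(i : ℕ) :: v.1, (RTree.mem_pos_cons i).mpr v.2⟩)
  invFun p := M.glue σ ts p.1 p.2
  left_inv ρ := by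
    funext w
    obtain ⟨w, hw⟩ := w
    rcases RTree.pos_cases hw with rfl | ⟨i, v, hv, rfl⟩
    · rfl
    · show M.glue σ ts _ _ ⟨(i : ℕ) :: v, hw⟩ = _
      rw [WTA.glue_cons M σ ts _ _ i v hv]
  right_inv p := by
    obtain ⟨q, ρs⟩ := p
    refine Prod.ext rfl ?_
    funext i v
    simp only
    rw [show ((⟨(i : ℕ) :: v.1, (RTree.mem_pos_cons i).mpr v.2⟩ : ↑((RTree.node σ ts).pos))
      = ⟨(i : ℕ) :: v.1, (RTree.mem_pos_cons i).mpr v.2⟩) from rfl]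
    rw [WTA.glue_cons M σ ts q ρs i v.1 v.2]

lemma WTA.h_node (M : WTA S B) (σ : S.symb) (ts : Fin (S.rk σ) → RTree S) (q : M.Q) :
    M.h (RTree.node σ ts) q
      = ∑ qs : Fin (S.rk σ) → M.Q,
          (((List.finRange (S.rk σ)).map (fun i => M.h (ts i) (qs i))).prod) * M.δ σ qs q := rfl

lemma WTA.extend_mem (M : WTA S B) (t : RTree S) (ρ : ↑(t.pos) → M.Q) {w : List ℕ}
    (h : w ∈ t.pos) : M.extend t ρ w = ρ ⟨w, h⟩ := dif_pos h

lemma WTA.wt_congr (M : WTA S B) : ∀ (t : RTree S) (ρ ρ' : List ℕ → M.Q),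
    (∀ w ∈ t.pos, ρ w = ρ' w) → M.wt t ρ = M.wt t ρ'
  | .node σ ts => fun ρ ρ' h => by
    simp only [WTA.wt]
    have h0 : ρ [] = ρ' [] := h [] (RTree.mem_pos_nil _)
    have h1 : ∀ i : Fin (S.rk σ), ρ [(i : ℕ)] = ρ' [(i : ℕ)] := fun i =>
      h [(i : ℕ)] ((RTree.mem_pos_cons i).mpr (RTree.mem_pos_nil _))
    have h2 : (fun i : Fin (S.rk σ) => ρ [(i : ℕ)]) = fun i : Fin (S.rk σ) => ρ' [(i : ℕ)] := funext h1
    rw [h0, h2]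
    congr 1
    congr 1
    apply List.map_congr_left
    intro i _
    exact M.wt_congr (ts i) _ _ (fun w hw => h ((i : ℕ) :: w) ((RTree.mem_pos_cons i).mpr hw))

lemma WTA.extend_glue_nil (M : WTA S B) (σ : S.symb) (ts : Fin (S.rk σ) → RTree S)
    (q : M.Q) (ρs : ∀ i, (↑((ts i).pos) → M.Q)) :
    M.extend _ (M.glue σ ts q ρs) [] = q := by
  rw [M.extend_mem _ _ (RTree.mem_pos_nil _)]
  exact WTA.glue_nil M σ ts q ρs _

lemma WTA.wt_glue (M : WTA S B) (σ : S.symb) (ts : Fin (S.rk σ) → RTree S)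
    (q : M.Q) (ρs : ∀ i, (↑((ts i).pos) → M.Q)) :
    M.wt (RTree.node σ ts) (M.extend _ (M.glue σ ts q ρs))
      = ((List.finRange (S.rk σ)).map
          (fun i => M.wt (ts i) (M.extend (ts i) (ρs i)))).prod
        * M.δ σ (fun i => M.extend (ts i) (ρs i) []) q := by
  simp only [WTA.wt]
  congr 1
  · congr 1
    apply List.map_congr_left
    intro i _
    apply M.wt_congr
    intro w hw
    rw [M.extend_mem _ _ ((RTree.mem_pos_cons i).mpr hw),
      WTA.glue_cons M σ ts q ρs i w hw, M.extend_mem _ _ hw]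
  · congr 1
    · funext i
      have h : [(i : ℕ)] ∈ (RTree.node σ ts).pos :=
        (RTree.mem_pos_cons i).mpr (RTree.mem_pos_nil _)
      rw [M.extend_mem _ _ h, WTA.glue_cons M σ ts q ρs i [] (RTree.mem_pos_nil _),
        M.extend_mem _ _ (RTree.mem_pos_nil _)]
    · exact M.extend_glue_nil σ ts q ρs

open Classical in
/-- the sum of the weights of all runs with a given root state. -/
noncomputable def WTA.rsum (M : WTA S B) (t : RTree S) (q : M.Q) : B :=
  ∑ ρ : ↑(t.pos) → M.Q, if M.extend t ρ [] = q then M.wt t (M.extend t ρ) else 0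

open Classical in
lemma WTA.rsum_node (M : WTA S B) (σ : S.symb) (ts : Fin (S.rk σ) → RTree S) (q : M.Q) :
    M.rsum (RTree.node σ ts) q
      = ∑ ρs : ∀ i, (↑((ts i).pos) → M.Q),
          ((List.finRange (S.rk σ)).map
            (fun i => M.wt (ts i) (M.extend (ts i) (ρs i)))).prod
          * M.δ σ (fun i => M.extend (ts i) (ρs i) []) q := by
  rw [WTA.rsum, ← Equiv.sum_comp (M.runEquiv σ ts).symm
    (fun ρ => if M.extend _ ρ [] = q then M.wt _ (M.extend _ ρ) else 0)]
  have hsymm : ∀ p : M.Q × (∀ i, (↑((ts i).pos) → M.Q)),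
      (M.runEquiv σ ts).symm p = M.glue σ ts p.1 p.2 := fun p => rfl
  simp only [hsymm]
  rw [Fintype.sum_prod_type]
  rw [Finset.sum_comm]
  apply Finset.sum_congr rfl
  intro ρs _
  simp only [WTA.extend_glue_nil, WTA.wt_glue]
  rw [Finset.sum_ite_eq' Finset.univ q
    (fun p => ((List.finRange (S.rk σ)).map
      (fun i => M.wt (ts i) (M.extend (ts i) (ρs i)))).prod
      * M.δ σ (fun i => M.extend (ts i) (ρs i) []) p)]
  simp

end Infra2

section Infra3

variable {S : RankedAlphabet} {B : Type} [StrongBimonoid B]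

lemma finRange_eq_nil {k : ℕ} (h : k = 0) : List.finRange k = [] := by subst h; rfl

lemma WTA.runSem_node (M : WTA S B) (σ : S.symb) (ts : Fin (S.rk σ) → RTree S) :
    M.runSem (RTree.node σ ts)
      = ∑ p : M.Q, ∑ ρs : ∀ i, (↑((ts i).pos) → M.Q),
          (((List.finRange (S.rk σ)).map
            (fun i => M.wt (ts i) (M.extend (ts i) (ρs i)))).prod
          * M.δ σ (fun i => M.extend (ts i) (ρs i) []) p) * M.F p := by
  rw [WTA.runSem, ← Equiv.sum_comp (M.runEquiv σ ts).symm
    (fun ρ => M.wt _ (M.extend _ ρ) * M.F (M.extend _ ρ []))]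
  have hsymm : ∀ p : M.Q × (∀ i, (↑((ts i).pos) → M.Q)),
      (M.runEquiv σ ts).symm p = M.glue σ ts p.1 p.2 := fun p => rfl
  simp only [hsymm]
  rw [Fintype.sum_prod_type]
  apply Finset.sum_congr rfl
  intro p _
  apply Finset.sum_congr rfl
  intro ρs _
  rw [WTA.wt_glue, WTA.extend_glue_nil]

lemma WTA.runSem_eq_sum_rsum (M : WTA S B) (σ : S.symb) (ts : Fin (S.rk σ) → RTree S)
    (hd : S.rk σ = 0 ∨ SBRightDistributive B) :
    M.runSem (RTree.node σ ts) = ∑ q, M.rsum (RTree.node σ ts) q * M.F q := by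
  rw [WTA.runSem_node]
  apply Finset.sum_congr rfl
  intro q _
  rw [WTA.rsum_node]
  rcases hd with h0 | hrd
  · haveI : IsEmpty (Fin (S.rk σ)) := ⟨fun i => absurd i.isLt (by omega)⟩
    rw [Fintype.sum_unique, Fintype.sum_unique]
  · rw [sum_mul_of_rdist hrd]

open Classical in
lemma WTA.rsum_eq_h (M : WTA S B)
    (hr : (∃ σ, S.rk σ ≠ 0) → SBRightDistributive B)
    (hl : (∃ σ, 2 ≤ S.rk σ) → SBLeftDistributive B) :
    ∀ (t : RTree S) (q : M.Q), M.rsum t q = M.h t q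
  | .node σ ts => fun q => by
    have IH : ∀ (i : Fin (S.rk σ)) (p : M.Q), M.rsum (ts i) p = M.h (ts i) p :=
      fun i => M.rsum_eq_h hr hl (ts i)
    rw [WTA.rsum_node]
    show _ = ∑ qs : Fin (S.rk σ) → M.Q,
      (((List.finRange (S.rk σ)).map (fun i => M.h (ts i) (qs i))).prod) * M.δ σ qs q
    rcases Nat.eq_zero_or_pos (S.rk σ) with hk | hk
    · haveI : IsEmpty (Fin (S.rk σ)) := ⟨fun i => absurd i.isLt (by omega)⟩
      rw [Fintype.sum_unique, Fintype.sum_unique]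
      congr 1
      · rw [finRange_eq_nil hk]
        simp
      · congr 1
        funext i
        exact isEmptyElim i
    · have hrd : SBRightDistributive B := hr ⟨σ, by omega⟩
      have hr' : 1 ≤ S.rk σ → SBRightDistributive B := fun _ => hrd
      have hl' : 2 ≤ S.rk σ → SBLeftDistributive B := fun h => hl ⟨σ, h⟩
      have key : ∀ qs : Fin (S.rk σ) → M.Q,
          ((List.finRange (S.rk σ)).map (fun i => M.rsum (ts i) (qs i))).prod
            = ∑ ρs : ∀ i, (↑((ts i).pos) → M.Q),
                if (∀ i, M.extend (ts i) (ρs i) [] = qs i) then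
                  ((List.finRange (S.rk σ)).map
                    (fun i => M.wt (ts i) (M.extend (ts i) (ρs i)))).prod
                else 0 := by
        intro qs
        rw [show (fun i => M.rsum (ts i) (qs i))
            = fun i => ∑ ρ : ↑((ts i).pos) → M.Q,
                if M.extend (ts i) ρ [] = qs i then M.wt (ts i) (M.extend (ts i) ρ) else 0
          from rfl]
        rw [prod_sum_expand (S.rk σ) hr' hl' (fun i => ↑((ts i).pos) → M.Q)
          (fun i => inferInstance)
          (fun i ρ => if M.extend (ts i) ρ [] = qs i then M.wt (ts i) (M.extend (ts i) ρ) else 0)]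
        apply Finset.sum_congr rfl
        intro ρs _
        rw [list_prod_ite (fun i => M.extend (ts i) (ρs i) [] = qs i)]
      have step : ∑ qs : Fin (S.rk σ) → M.Q,
          (((List.finRange (S.rk σ)).map (fun i => M.h (ts i) (qs i))).prod) * M.δ σ qs q
          = ∑ qs : Fin (S.rk σ) → M.Q, ∑ ρs : ∀ i, (↑((ts i).pos) → M.Q),
              (if (∀ i, M.extend (ts i) (ρs i) [] = qs i) then
                ((List.finRange (S.rk σ)).map
                  (fun i => M.wt (ts i) (M.extend (ts i) (ρs i)))).prod
              else 0) * M.δ σ qs q := by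
        apply Finset.sum_congr rfl
        intro qs _
        rw [← sum_mul_of_rdist hrd]
        congr 1
        rw [← key qs]
        simp only [IH]
      rw [step, Finset.sum_comm]
      apply Finset.sum_congr rfl
      intro ρs _
      have hpt : ∀ qs : Fin (S.rk σ) → M.Q,
          (if (∀ i, M.extend (ts i) (ρs i) [] = qs i) then
            ((List.finRange (S.rk σ)).map
              (fun i => M.wt (ts i) (M.extend (ts i) (ρs i)))).prod
          else 0) * M.δ σ qs q
          = if (fun i => M.extend (ts i) (ρs i) []) = qs then
              ((List.finRange (S.rk σ)).map
                (fun i => M.wt (ts i) (M.extend (ts i) (ρs i)))).prod * M.δ σ qs q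
            else 0 := by
        intro qs
        rw [ite_mul, zero_mul]
        exact if_congr funext_iff.symm rfl rfl
      simp only [hpt]
      rw [Finset.sum_ite_eq Finset.univ (fun i => M.extend (ts i) (ρs i) [])
        (fun qs => ((List.finRange (S.rk σ)).map
          (fun i => M.wt (ts i) (M.extend (ts i) (ρs i)))).prod * M.δ σ qs q)]
      simp

lemma WTA.forward (hr : (∃ σ, S.rk σ ≠ 0) → SBRightDistributive B)
    (hl : (∃ σ, 2 ≤ S.rk σ) → SBLeftDistributive B) (M : WTA S B) (t : RTree S) :
    M.runSem t = M.initSem t := by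
  cases t with
  | node σ ts =>
    have hd : S.rk σ = 0 ∨ SBRightDistributive B := by
      rcases Nat.eq_zero_or_pos (S.rk σ) with h | h
      · exact Or.inl h
      · exact Or.inr (hr ⟨σ, by omega⟩)
    rw [WTA.initSem, WTA.runSem_eq_sum_rsum M σ ts hd]
    apply Finset.sum_congr rfl
    intro q _
    rw [M.rsum_eq_h hr hl]

end Infra3

section Infra4

variable {S : RankedAlphabet} {B : Type} [StrongBimonoid B]

open Classical in
lemma sum_eq_one_pt {ι : Type*} [Fintype ι] (f : ι → B) (x : ι)
    (h0 : ∀ i, i ≠ x → f i = 0) : ∑ i, f i = f x :=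
  Finset.sum_eq_single x (fun b _ hb => h0 b hb) (fun h => absurd (Finset.mem_univ x) h)

open Classical in
lemma sum_eq_two_pt {ι : Type*} [Fintype ι] (f : ι → B) (x y : ι) (hxy : x ≠ y)
    (h0 : ∀ i, i ≠ x → i ≠ y → f i = 0) : ∑ i, f i = f x + f y := by
  have : ∀ i, f i = (if i = x then f x else 0) + (if i = y then f y else 0) := by
    intro i
    by_cases h1 : i = x
    · subst h1
      rw [if_pos rfl, if_neg hxy, add_zero]
    · by_cases h2 : i = y
      · subst h2
        rw [if_neg h1, if_pos rfl, zero_add]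
      · rw [if_neg h1, if_neg h2, add_zero, h0 i h1 h2]
  rw [Finset.sum_congr rfl (fun i _ => this i), Finset.sum_add_distrib,
    Finset.sum_ite_eq' Finset.univ x (fun i => f x), Finset.sum_ite_eq' Finset.univ y
    (fun i => f y)]
  simp

open Classical in
lemma sum_pi_prod_two {k : ℕ} {A : Type} [Fintype A] (W : Fin k → A → B) (e : B)
    (j0 : Fin k) (u : Fin k → A) (x y : A) (hxy : x ≠ y)
    (hW : ∀ i, i ≠ j0 → ∀ a, a ≠ u i → W i a = 0)
    (hWj : ∀ a, a ≠ x → a ≠ y → W j0 a = 0) :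
    ∑ v : Fin k → A, ((List.finRange k).map (fun i => W i (v i))).prod * e
      = ((List.finRange k).map (fun i => W i (if i = j0 then x else u i))).prod * e
        + ((List.finRange k).map (fun i => W i (if i = j0 then y else u i))).prod * e := by
  have hvxy : (fun i => if i = j0 then x else u i) ≠ (fun i => if i = j0 then y else u i) := by
    intro h
    exact hxy (by simpa using congrFun h j0)
  refine (sum_eq_two_pt _ _ _ hvxy ?_)
  intro v hvx hvy
  suffices hz : ∃ i, W i (v i) = 0 by
    obtain ⟨i, hi⟩ := hz
    rw [List.prod_eq_zero, zero_mul]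
    exact List.mem_map.mpr ⟨i, List.mem_finRange i, hi⟩
  by_cases h1 : v j0 = x
  · have hex : ∃ i, v i ≠ (fun i => if i = j0 then x else u i) i := by
      by_contra h
      push_neg at h
      exact hvx (funext h)
    obtain ⟨i, hi⟩ := hex
    have hij : i ≠ j0 := by
      intro h
      subst h
      simp only [if_pos rfl] at hi
      exact hi h1
    refine ⟨i, hW i hij _ ?_⟩
    simpa [if_neg hij] using hi
  · by_cases h2 : v j0 = y
    · have hex : ∃ i, v i ≠ (fun i => if i = j0 then y else u i) i := by
        by_contra h
        push_neg at h
        exact hvy (funext h)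
      obtain ⟨i, hi⟩ := hex
      have hij : i ≠ j0 := by
        intro h
        subst h
        simp only [if_pos rfl] at hi
        exact hi h2
      refine ⟨i, hW i hij _ ?_⟩
      simpa [if_neg hij] using hi
    · exact ⟨j0, hWj _ h1 h2⟩

/-- leaf values of the counterexample automaton -/
def lv (q : Fin 5) : B := if q = 0 ∨ q = 1 then 1 else 0

/-- the designated tuple of states -/
def dvec (d0 d1 : Fin 5) {k : ℕ} : Fin k → Fin 5 :=
  fun i => if (i : ℕ) = 0 then d0 else if (i : ℕ) = 1 then d1 else 0

/-- transition table at the distinguished non-nullary symbol -/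
def tbl (xp xs1 xs2 xf : B) (d0 d1 : Fin 5) {k : ℕ} (qs : Fin k → Fin 5) (r : Fin 5) : B :=
  if r = 2 ∧ (∀ i, qs i = 0) then xp
  else if r = 3 ∧ (∀ i, qs i = 0) then xs1
  else if r = 3 ∧ (∀ i, qs i = 1) then xs2
  else if r = 0 ∧ (∀ i, qs i = 0) then 1
  else if r = 4 ∧ (∀ i, qs i = dvec d0 d1 i) then xf
  else 0

open Classical in
/-- the counterexample automaton -/
@[reducible] noncomputable def mkM (S : RankedAlphabet) (B : Type) [StrongBimonoid B] (σ0 : S.symb)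
    (xp xs1 xs2 xf : B) (d0 d1 : Fin 5) : WTA S B where
  Q := Fin 5
  fintypeQ := inferInstance
  nonemptyQ := inferInstance
  δ := fun τ qs r => if S.rk τ = 0 then lv r
    else if τ = σ0 then tbl xp xs1 xs2 xf d0 d1 qs r else 0
  F := fun q => if q = 4 then 1 else 0

/-- the leaf tree -/
def leafT (α : S.symb) (hα : S.rk α = 0) : RTree S :=
  RTree.node α (fun i => absurd i.isLt (by omega))

def t1T (σ0 : S.symb) (α : S.symb) (hα : S.rk α = 0) : RTree S :=
  RTree.node σ0 (fun _ => leafT α hα)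

def t2T (σ0 : S.symb) (α : S.symb) (hα : S.rk α = 0) : RTree S :=
  RTree.node σ0 (fun _ => t1T σ0 α hα)

end Infra4

section Infra5

variable {S : RankedAlphabet} {B : Type} [StrongBimonoid B]

lemma tbl_r1 (xp xs1 xs2 xf : B) (d0 d1 : Fin 5) {k : ℕ} (qs : Fin k → Fin 5) :
    tbl xp xs1 xs2 xf d0 d1 qs 1 = 0 := by
  simp [tbl]

lemma tbl_r2 (xp xs1 xs2 xf : B) (d0 d1 : Fin 5) {k : ℕ} (qs : Fin k → Fin 5) :
    tbl xp xs1 xs2 xf d0 d1 qs 2 = if (∀ i, qs i = 0) then xp else 0 := by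
  by_cases h : ∀ i, qs i = 0 <;> simp [tbl, h]

lemma tbl_r3 (xp xs1 xs2 xf : B) (d0 d1 : Fin 5) {k : ℕ} (qs : Fin k → Fin 5) :
    tbl xp xs1 xs2 xf d0 d1 qs 3
      = if (∀ i, qs i = 0) then xs1 else if (∀ i, qs i = 1) then xs2 else 0 := by
  by_cases h : ∀ i, qs i = 0 <;> by_cases h' : ∀ i, qs i = 1 <;> simp [tbl, h, h']

lemma tbl_r0 (xp xs1 xs2 xf : B) (d0 d1 : Fin 5) {k : ℕ} (qs : Fin k → Fin 5) :
    tbl xp xs1 xs2 xf d0 d1 qs 0 = if (∀ i, qs i = 0) then (1 : B) else 0 := by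
  by_cases h : ∀ i, qs i = 0 <;> simp [tbl, h]

lemma tbl_r4 (xp xs1 xs2 xf : B) (d0 d1 : Fin 5) {k : ℕ} (qs : Fin k → Fin 5) :
    tbl xp xs1 xs2 xf d0 d1 qs 4
      = if (∀ i, qs i = dvec d0 d1 i) then xf else 0 := by
  by_cases h : ∀ i, qs i = dvec d0 d1 i <;> simp [tbl, h]

lemma δ_at_nullary (σ0 : S.symb) (xp xs1 xs2 xf : B) (d0 d1 : Fin 5)
    (τ : S.symb) (hτ : S.rk τ = 0) (qs : Fin (S.rk τ) → Fin 5) (r : Fin 5) :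
    (mkM S B σ0 xp xs1 xs2 xf d0 d1).δ τ qs r = lv r := by
  simp [mkM, hτ]

lemma δ_at_σ0 (σ0 : S.symb) (hσ : S.rk σ0 ≠ 0) (xp xs1 xs2 xf : B) (d0 d1 : Fin 5)
    (qs : Fin (S.rk σ0) → Fin 5) (r : Fin 5) :
    (mkM S B σ0 xp xs1 xs2 xf d0 d1).δ σ0 qs r = tbl xp xs1 xs2 xf d0 d1 qs r := by
  simp only [mkM]
  rw [if_neg hσ]
  simp

lemma h_leaf (σ0 α : S.symb) (hα : S.rk α = 0) (xp xs1 xs2 xf : B) (d0 d1 : Fin 5)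
    (q : Fin 5) :
    (mkM S B σ0 xp xs1 xs2 xf d0 d1).h (leafT α hα) q = lv q := by
  haveI : IsEmpty (Fin (S.rk α)) := ⟨fun i => absurd i.isLt (by omega)⟩
  show (mkM S B σ0 xp xs1 xs2 xf d0 d1).h (RTree.node α _) q = lv q
  simp only [WTA.h]
  rw [Fintype.sum_unique, finRange_eq_nil hα]
  rw [List.map_nil, List.prod_nil, one_mul, if_pos hα]

lemma wt_leaf (σ0 α : S.symb) (hα : S.rk α = 0) (xp xs1 xs2 xf : B) (d0 d1 : Fin 5)
    (ρ : List ℕ → Fin 5) :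
    (mkM S B σ0 xp xs1 xs2 xf d0 d1).wt (leafT α hα) ρ = lv (ρ []) := by
  show (mkM S B σ0 xp xs1 xs2 xf d0 d1).wt (RTree.node α _) ρ = lv (ρ [])
  simp only [WTA.wt]
  rw [finRange_eq_nil hα, List.map_nil, List.prod_nil, one_mul,
    if_pos hα]

lemma pos_leaf (α : S.symb) (hα : S.rk α = 0) : (leafT α hα).pos = {[]} := by
  haveI : IsEmpty (Fin (S.rk α)) := ⟨fun i => absurd i.isLt (by omega)⟩
  show (RTree.node α _).pos = {[]}
  rw [RTree.pos]
  simp [Finset.univ_eq_empty]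

/-- runs on a leaf are just states -/
noncomputable def leafRunEq (M : WTA S B) (α : S.symb) (hα : S.rk α = 0) :
    (↑((leafT α hα).pos) → M.Q) ≃ M.Q where
  toFun ρ := ρ ⟨[], RTree.mem_pos_nil _⟩
  invFun q := fun _ => q
  left_inv ρ := by
    funext w
    obtain ⟨w, hw⟩ := w
    have hw' : w = [] := by
      rw [pos_leaf α hα] at hw
      simpa using hw
    subst hw'
    rfl
  right_inv q := rfl

/-- runs on `t1` are pairs of a root state and a tuple of leaf states -/
noncomputable def t1RunEq (σ0 α : S.symb) (hα : S.rk α = 0) (M : WTA S B) :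
    (↑((t1T σ0 α hα).pos) → M.Q) ≃ M.Q × (Fin (S.rk σ0) → M.Q) :=
  (M.runEquiv σ0 (fun _ => leafT α hα)).trans
    ((Equiv.refl M.Q).prodCongr (Equiv.piCongrRight (fun _ => leafRunEq M α hα)))

lemma t1RunEq_symm (σ0 α : S.symb) (hα : S.rk α = 0) (M : WTA S B)
    (a : M.Q × (Fin (S.rk σ0) → M.Q)) :
    (t1RunEq σ0 α hα M).symm a
      = M.glue σ0 (fun _ => leafT α hα) a.1 (fun j _ => a.2 j) := rfl

lemma t1_root (σ0 α : S.symb) (hα : S.rk α = 0) (M : WTA S B)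
    (a : M.Q × (Fin (S.rk σ0) → M.Q)) :
    M.extend (t1T σ0 α hα) ((t1RunEq σ0 α hα M).symm a) [] = a.1 := by
  rw [t1RunEq_symm]
  exact M.extend_glue_nil σ0 _ a.1 _

/-- weight of a run on t1 in terms of its state data -/
lemma t1_wt (σ0 α : S.symb) (hσ : S.rk σ0 ≠ 0) (hα : S.rk α = 0)
    (xp xs1 xs2 xf : B) (d0 d1 : Fin 5) (a : Fin 5 × (Fin (S.rk σ0) → Fin 5)) :
    (mkM S B σ0 xp xs1 xs2 xf d0 d1).wt (t1T σ0 α hα)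
        ((mkM S B σ0 xp xs1 xs2 xf d0 d1).extend (t1T σ0 α hα)
          ((t1RunEq σ0 α hα (mkM S B σ0 xp xs1 xs2 xf d0 d1)).symm a))
      = ((List.finRange (S.rk σ0)).map (fun j => lv (a.2 j))).prod
        * tbl xp xs1 xs2 xf d0 d1 a.2 a.1 := by
  rw [t1RunEq_symm]
  show (mkM S B σ0 xp xs1 xs2 xf d0 d1).wt (RTree.node σ0 _)
    ((mkM S B σ0 xp xs1 xs2 xf d0 d1).extend _
      ((mkM S B σ0 xp xs1 xs2 xf d0 d1).glue σ0 _ a.1 (fun j _ => a.2 j))) = _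
  rw [WTA.wt_glue]
  have hroot : ∀ j : Fin (S.rk σ0),
      (mkM S B σ0 xp xs1 xs2 xf d0 d1).extend (leafT α hα) (fun _ => a.2 j) [] = a.2 j := by
    intro j
    rw [WTA.extend_mem _ _ _ (RTree.mem_pos_nil _)]
  congr 1
  · congr 1
    apply List.map_congr_left
    intro j _
    rw [wt_leaf σ0 α hα xp xs1 xs2 xf d0 d1, hroot j]
  · rw [show (fun j => (mkM S B σ0 xp xs1 xs2 xf d0 d1).extend (leafT α hα)
        (fun _ => a.2 j) []) = a.2 from funext hroot]
    exact δ_at_σ0 σ0 hσ xp xs1 xs2 xf d0 d1 a.2 a.1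

end Infra5

section Infra6

variable {S : RankedAlphabet} {B : Type} [StrongBimonoid B]

/-- weight of a run on t1, as a function of its state data -/
def Ufun (xp xs1 xs2 xf : B) (d0 d1 : Fin 5) {k : ℕ} (a : Fin 5 × (Fin k → Fin 5)) : B :=
  ((List.finRange k).map (fun j => lv (a.2 j))).prod * tbl xp xs1 xs2 xf d0 d1 a.2 a.1

def Wfun (xp xs1 xs2 xf : B) (d0 d1 : Fin 5) {k : ℕ} (i : Fin k)
    (a : Fin 5 × (Fin k → Fin 5)) : B :=
  if a.1 = dvec d0 d1 i then Ufun xp xs1 xs2 xf d0 d1 a else 0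

lemma h_t1_0 (σ0 α : S.symb) (hσ : S.rk σ0 ≠ 0) (hα : S.rk α = 0)
    (xp xs1 xs2 xf : B) (d0 d1 : Fin 5) :
    (mkM S B σ0 xp xs1 xs2 xf d0 d1).h (t1T σ0 α hα) (0 : Fin 5) = 1 := by
  show (mkM S B σ0 xp xs1 xs2 xf d0 d1).h (RTree.node σ0 fun _ => leafT α hα) (0 : Fin 5) = 1
  rw [WTA.h_node]
  simp only [h_leaf σ0 α hα xp xs1 xs2 xf d0 d1,
    δ_at_σ0 σ0 hσ xp xs1 xs2 xf d0 d1, tbl_r0, hσ, ↓reduceIte]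
  refine (sum_eq_one_pt _ (fun _ => (0 : Fin 5)) ?_).trans ?_
  · intro qs hqs
    rw [if_neg (fun h => hqs (funext h)), mul_zero]
  · rw [if_pos (fun i => rfl), list_prod_eq_one _ (fun i => by simp [lv]), one_mul]

lemma h_t1_2 (σ0 α : S.symb) (hσ : S.rk σ0 ≠ 0) (hα : S.rk α = 0)
    (xp xs1 xs2 xf : B) (d0 d1 : Fin 5) :
    (mkM S B σ0 xp xs1 xs2 xf d0 d1).h (t1T σ0 α hα) (2 : Fin 5) = xp := by
  show (mkM S B σ0 xp xs1 xs2 xf d0 d1).h (RTree.node σ0 fun _ => leafT α hα) (2 : Fin 5) = xp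
  rw [WTA.h_node]
  simp only [h_leaf σ0 α hα xp xs1 xs2 xf d0 d1,
    δ_at_σ0 σ0 hσ xp xs1 xs2 xf d0 d1, tbl_r2, hσ, ↓reduceIte]
  refine (sum_eq_one_pt _ (fun _ => (0 : Fin 5)) ?_).trans ?_
  · intro qs hqs
    rw [if_neg (fun h => hqs (funext h)), mul_zero]
  · rw [if_pos (fun i => rfl), list_prod_eq_one _ (fun i => by simp [lv]), one_mul]

lemma h_t1_3 (σ0 α : S.symb) (hσ : S.rk σ0 ≠ 0) (hα : S.rk α = 0)
    (xp xs1 xs2 xf : B) (d0 d1 : Fin 5) :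
    (mkM S B σ0 xp xs1 xs2 xf d0 d1).h (t1T σ0 α hα) (3 : Fin 5) = xs1 + xs2 := by
  have i0 : Fin (S.rk σ0) := ⟨0, Nat.pos_of_ne_zero hσ⟩
  show (mkM S B σ0 xp xs1 xs2 xf d0 d1).h (RTree.node σ0 fun _ => leafT α hα) (3 : Fin 5) = _
  rw [WTA.h_node]
  simp only [h_leaf σ0 α hα xp xs1 xs2 xf d0 d1,
    δ_at_σ0 σ0 hσ xp xs1 xs2 xf d0 d1, tbl_r3, hσ, ↓reduceIte]
  refine (sum_eq_two_pt _ (fun _ => (0 : Fin 5)) (fun _ => (1 : Fin 5)) ?_ ?_).trans ?_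
  · intro h
    exact absurd (congrFun h i0) (by simp)
  · intro qs h0 h1
    rw [if_neg (fun h => h0 (funext h)), if_neg (fun h => h1 (funext h)), mul_zero]
  · rw [if_pos (fun i => rfl), if_neg (fun h => by simpa using h i0),
      if_pos (fun i => rfl), list_prod_eq_one _ (fun i => by simp [lv]),
      list_prod_eq_one _ (fun i => by simp [lv]), one_mul, one_mul]

lemma h_t2_4 (σ0 α : S.symb) (hσ : S.rk σ0 ≠ 0) (hα : S.rk α = 0)
    (xp xs1 xs2 xf : B) (d0 d1 : Fin 5) :
    (mkM S B σ0 xp xs1 xs2 xf d0 d1).h (t2T σ0 α hα) (4 : Fin 5)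
      = ((List.finRange (S.rk σ0)).map (fun i =>
          (mkM S B σ0 xp xs1 xs2 xf d0 d1).h (t1T σ0 α hα) (dvec d0 d1 i))).prod * xf := by
  show (mkM S B σ0 xp xs1 xs2 xf d0 d1).h (RTree.node σ0 fun _ => t1T σ0 α hα) (4 : Fin 5) = _
  rw [WTA.h_node]
  simp only [δ_at_σ0 σ0 hσ xp xs1 xs2 xf d0 d1, tbl_r4, hσ, ↓reduceIte]
  refine (sum_eq_one_pt _ (dvec d0 d1) ?_).trans ?_
  · intro qs hqs
    rw [if_neg (fun h => hqs (funext h)), mul_zero]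
  · rw [if_pos (fun i => rfl)]

lemma init_ind (σ0 : S.symb) (xp xs1 xs2 xf : B) (d0 d1 : Fin 5) (t : RTree S) :
    (mkM S B σ0 xp xs1 xs2 xf d0 d1).initSem t
      = (mkM S B σ0 xp xs1 xs2 xf d0 d1).h t (4 : Fin 5) := by
  rw [WTA.initSem]
  refine (sum_eq_one_pt _ ((4 : Fin 5)) ?_).trans ?_
  · intro q hq
    have hF : (mkM S B σ0 xp xs1 xs2 xf d0 d1).F q = 0 := by
      simp [mkM, hq]
    rw [hF, mul_zero]
  · have hF : (mkM S B σ0 xp xs1 xs2 xf d0 d1).F (4 : Fin 5) = 1 := by simp [mkM]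
    rw [hF, mul_one]

open Classical in
lemma run_ind (σ0 : S.symb) (xp xs1 xs2 xf : B) (d0 d1 : Fin 5) (t : RTree S) :
    (mkM S B σ0 xp xs1 xs2 xf d0 d1).runSem t
      = (mkM S B σ0 xp xs1 xs2 xf d0 d1).rsum t (4 : Fin 5) := by
  rw [WTA.runSem, WTA.rsum]
  apply Finset.sum_congr rfl
  intro ρ _
  by_cases h : (mkM S B σ0 xp xs1 xs2 xf d0 d1).extend t ρ [] = (4 : Fin 5)
  · rw [if_pos h, h]
    have hF : (mkM S B σ0 xp xs1 xs2 xf d0 d1).F (4 : Fin 5) = 1 := by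
      simp [mkM]
    rw [hF, mul_one]
  · rw [if_neg h]
    have hF : (mkM S B σ0 xp xs1 xs2 xf d0 d1).F
        ((mkM S B σ0 xp xs1 xs2 xf d0 d1).extend t ρ []) = 0 := if_neg h
    rw [hF, mul_zero]

lemma t1_wt' (σ0 α : S.symb) (hσ : S.rk σ0 ≠ 0) (hα : S.rk α = 0)
    (xp xs1 xs2 xf : B) (d0 d1 : Fin 5)
    (ρ : ↑((t1T σ0 α hα).pos) → (mkM S B σ0 xp xs1 xs2 xf d0 d1).Q) :
    (mkM S B σ0 xp xs1 xs2 xf d0 d1).wt (t1T σ0 α hα)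
        ((mkM S B σ0 xp xs1 xs2 xf d0 d1).extend (t1T σ0 α hα) ρ)
      = Ufun xp xs1 xs2 xf d0 d1
          ((t1RunEq σ0 α hα (mkM S B σ0 xp xs1 xs2 xf d0 d1)) ρ) := by
  have := t1_wt σ0 α hσ hα xp xs1 xs2 xf d0 d1
    ((t1RunEq σ0 α hα (mkM S B σ0 xp xs1 xs2 xf d0 d1)) ρ)
  rw [Equiv.symm_apply_apply] at this
  exact this

lemma t1_root' (σ0 α : S.symb) (hα : S.rk α = 0) (M : WTA S B)
    (ρ : ↑((t1T σ0 α hα).pos) → M.Q) :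
    M.extend (t1T σ0 α hα) ρ [] = ((t1RunEq σ0 α hα M) ρ).1 := by
  have := t1_root σ0 α hα M ((t1RunEq σ0 α hα M) ρ)
  rw [Equiv.symm_apply_apply] at this
  exact this

lemma rsum_t2 (σ0 α : S.symb) (hσ : S.rk σ0 ≠ 0) (hα : S.rk α = 0)
    (xp xs1 xs2 xf : B) (d0 d1 : Fin 5) :
    (mkM S B σ0 xp xs1 xs2 xf d0 d1).rsum (t2T σ0 α hα) (4 : Fin 5)
      = ∑ v : Fin (S.rk σ0) → (Fin 5 × (Fin (S.rk σ0) → Fin 5)),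
          ((List.finRange (S.rk σ0)).map
            (fun i => Wfun xp xs1 xs2 xf d0 d1 i (v i))).prod * xf := by
  show (mkM S B σ0 xp xs1 xs2 xf d0 d1).rsum (RTree.node σ0 fun _ => t1T σ0 α hα)
    (4 : Fin 5) = _
  rw [WTA.rsum_node]
  have step1 : ∀ ρs : ∀ _ : Fin (S.rk σ0),
      (↑((t1T σ0 α hα).pos) → (mkM S B σ0 xp xs1 xs2 xf d0 d1).Q),
      ((List.finRange (S.rk σ0)).map
        (fun i => (mkM S B σ0 xp xs1 xs2 xf d0 d1).wt (t1T σ0 α hα)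
          ((mkM S B σ0 xp xs1 xs2 xf d0 d1).extend (t1T σ0 α hα) (ρs i)))).prod
        * (mkM S B σ0 xp xs1 xs2 xf d0 d1).δ σ0
          (fun i => (mkM S B σ0 xp xs1 xs2 xf d0 d1).extend (t1T σ0 α hα) (ρs i) [])
          (4 : Fin 5)
      = ((List.finRange (S.rk σ0)).map (fun i => Wfun xp xs1 xs2 xf d0 d1 i
          ((t1RunEq σ0 α hα (mkM S B σ0 xp xs1 xs2 xf d0 d1)) (ρs i)))).prod * xf := by
    intro ρs
    letI : DecidableEq (mkM S B σ0 xp xs1 xs2 xf d0 d1).Q := instDecidableEqFin 5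
    simp only [t1_wt' σ0 α hσ hα xp xs1 xs2 xf d0 d1,
      t1_root' σ0 α hα (mkM S B σ0 xp xs1 xs2 xf d0 d1)]
    rw [if_neg hσ, if_pos trivial, tbl_r4]
    rw [show (fun i => Wfun xp xs1 xs2 xf d0 d1 i
        ((t1RunEq σ0 α hα (mkM S B σ0 xp xs1 xs2 xf d0 d1)) (ρs i)))
      = fun i => if ((t1RunEq σ0 α hα (mkM S B σ0 xp xs1 xs2 xf d0 d1)) (ρs i)).1
          = dvec d0 d1 i then Ufun xp xs1 xs2 xf d0 d1
            ((t1RunEq σ0 α hα (mkM S B σ0 xp xs1 xs2 xf d0 d1)) (ρs i)) else 0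
      from rfl]
    rw [list_prod_ite, ite_mul, zero_mul, mul_ite, mul_zero]
  rw [Finset.sum_congr rfl (fun ρs _ => step1 ρs)]
  apply Fintype.sum_equiv
    (Equiv.piCongrRight (fun _ : Fin (S.rk σ0) =>
      t1RunEq σ0 α hα (mkM S B σ0 xp xs1 xs2 xf d0 d1)))
  intro ρs
  rfl

end Infra6

section Infra7

variable {S : RankedAlphabet} {B : Type} [StrongBimonoid B]

lemma Ufun_eval0 (xp xs1 xs2 xf : B) (d0 d1 : Fin 5) {k : ℕ} (q : Fin 5) :
    Ufun xp xs1 xs2 xf d0 d1 (q, fun _ : Fin k => (0 : Fin 5))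
      = tbl xp xs1 xs2 xf d0 d1 (fun _ : Fin k => (0 : Fin 5)) q := by
  simp only [Ufun]
  rw [list_prod_eq_one _ (fun i => by simp [lv]), one_mul]

lemma Ufun_eval1 (xp xs1 xs2 xf : B) (d0 d1 : Fin 5) {k : ℕ} (q : Fin 5) :
    Ufun xp xs1 xs2 xf d0 d1 (q, fun _ : Fin k => (1 : Fin 5))
      = tbl xp xs1 xs2 xf d0 d1 (fun _ : Fin k => (1 : Fin 5)) q := by
  simp only [Ufun]
  rw [list_prod_eq_one _ (fun i => by simp [lv]), one_mul]

lemma Ufun_zero (xp xs1 xs2 xf : B) (d0 d1 : Fin 5) {k : ℕ}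
    (a : Fin 5 × (Fin k → Fin 5)) (h : tbl xp xs1 xs2 xf d0 d1 a.2 a.1 = 0) :
    Ufun xp xs1 xs2 xf d0 d1 a = 0 := by
  simp only [Ufun]
  rw [h, mul_zero]

lemma backward_right (Heq : ∀ M : WTA S B, M.runSem = M.initSem) (σ0 : S.symb)
    (hσ : S.rk σ0 ≠ 0) : SBRightDistributive B := by
  obtain ⟨α, hα⟩ := S.exists_nullary
  intro x y z
  have hk : 0 < S.rk σ0 := Nat.pos_of_ne_zero hσ
  have h := congrFun (Heq (mkM S B σ0 0 x y z 3 0)) (t2T σ0 α hα)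
  rw [run_ind σ0 0 x y z 3 0, init_ind σ0 0 x y z 3 0,
    rsum_t2 σ0 α hσ hα 0 x y z 3 0, h_t2_4 σ0 α hσ hα 0 x y z 3 0] at h
  have hg : ∀ i : Fin (S.rk σ0), (i : ℕ) ≠ 0 →
      (mkM S B σ0 0 x y z 3 0).h (t1T σ0 α hα) (dvec 3 0 i) = 1 := by
    intro i hi
    have hd : dvec (3 : Fin 5) 0 i = 0 := by simp [dvec, hi]
    rw [hd]
    exact h_t1_0 σ0 α hσ hα 0 x y z 3 0
  rw [list_prod_eq_first hk _ hg] at h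
  have hd3 : dvec (3 : Fin 5) 0 (⟨0, hk⟩ : Fin (S.rk σ0)) = 3 := by simp [dvec]
  rw [hd3, h_t1_3 σ0 α hσ hα 0 x y z 3 0] at h
  -- now evaluate the run side
  have hxy : ((3 : Fin 5), fun _ : Fin (S.rk σ0) => (0 : Fin 5))
      ≠ ((3 : Fin 5), fun _ : Fin (S.rk σ0) => (1 : Fin 5)) := by
    intro hh
    have := congrFun (congrArg Prod.snd hh) ⟨0, hk⟩
    simp at this
  have hW : ∀ i : Fin (S.rk σ0), i ≠ ⟨0, hk⟩ →
      ∀ a : Fin 5 × (Fin (S.rk σ0) → Fin 5),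
        a ≠ ((0 : Fin 5), fun _ => (0 : Fin 5)) → Wfun 0 x y z 3 0 i a = 0 := by
    intro i hij a ha
    have hvi : (i : ℕ) ≠ 0 := fun hh => hij (Fin.ext hh)
    have hd : dvec (3 : Fin 5) 0 i = 0 := by simp [dvec, hvi]
    simp only [Wfun, hd]
    by_cases h1 : a.1 = 0
    · rw [if_pos h1]
      apply Ufun_zero
      rw [h1, tbl_r0, if_neg (fun hh => ha (Prod.ext h1 (funext hh)))]
    · rw [if_neg h1]
  have hWj : ∀ a : Fin 5 × (Fin (S.rk σ0) → Fin 5),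
      a ≠ ((3 : Fin 5), fun _ => (0 : Fin 5)) →
      a ≠ ((3 : Fin 5), fun _ => (1 : Fin 5)) →
      Wfun 0 x y z 3 0 (⟨0, hk⟩ : Fin (S.rk σ0)) a = 0 := by
    intro a ha0 ha1
    simp only [Wfun, hd3]
    by_cases h1 : a.1 = 3
    · rw [if_pos h1]
      apply Ufun_zero
      rw [h1, tbl_r3, if_neg (fun hh => ha0 (Prod.ext h1 (funext hh))),
        if_neg (fun hh => ha1 (Prod.ext h1 (funext hh)))]
    · rw [if_neg h1]
  rw [sum_pi_prod_two (Wfun 0 x y z 3 0) z (⟨0, hk⟩ : Fin (S.rk σ0))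
    (fun _ => ((0 : Fin 5), fun _ => (0 : Fin 5)))
    ((3 : Fin 5), fun _ => (0 : Fin 5)) ((3 : Fin 5), fun _ => (1 : Fin 5))
    hxy hW hWj] at h
  have hval : ∀ w : Fin 5 × (Fin (S.rk σ0) → Fin 5),
      ((List.finRange (S.rk σ0)).map (fun i => Wfun (0 : B) x y z 3 0 i
        (if i = (⟨0, hk⟩ : Fin (S.rk σ0)) then w
          else ((0 : Fin 5), fun _ => (0 : Fin 5))))).prod
      = Wfun (0 : B) x y z 3 0 (⟨0, hk⟩ : Fin (S.rk σ0)) w := by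
    intro w
    rw [list_prod_eq_first hk]
    · rw [if_pos rfl]
    · intro i hi
      have hij : i ≠ (⟨0, hk⟩ : Fin (S.rk σ0)) := fun hh => hi (by rw [hh])
      rw [if_neg hij]
      have hd : dvec (3 : Fin 5) 0 i = 0 := by simp [dvec, hi]
      simp only [Wfun, hd]
      rw [if_pos trivial, Ufun_eval0, tbl_r0, if_pos (fun _ => rfl)]
  rw [hval, hval] at h
  have hX : Wfun (0 : B) x y z 3 0 (⟨0, hk⟩ : Fin (S.rk σ0))
      ((3 : Fin 5), fun _ => (0 : Fin 5)) = x := by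
    simp only [Wfun, hd3]
    rw [if_pos trivial, Ufun_eval0, tbl_r3, if_pos (fun _ => rfl)]
  have hY : Wfun (0 : B) x y z 3 0 (⟨0, hk⟩ : Fin (S.rk σ0))
      ((3 : Fin 5), fun _ => (1 : Fin 5)) = y := by
    simp only [Wfun, hd3]
    rw [if_pos trivial, Ufun_eval1, tbl_r3, if_neg (fun hh => by simpa using hh ⟨0, hk⟩),
      if_pos (fun _ => rfl)]
  rw [hX, hY] at h
  exact h.symm

lemma backward_left (Heq : ∀ M : WTA S B, M.runSem = M.initSem) (σ0 : S.symb)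
    (hσ2 : 2 ≤ S.rk σ0) : SBLeftDistributive B := by
  obtain ⟨α, hα⟩ := S.exists_nullary
  have hσ : S.rk σ0 ≠ 0 := by omega
  intro x y z
  have h := congrFun (Heq (mkM S B σ0 x y z 1 2 3)) (t2T σ0 α hα)
  rw [run_ind σ0 x y z 1 2 3, init_ind σ0 x y z 1 2 3,
    rsum_t2 σ0 α hσ hα x y z 1 2 3, h_t2_4 σ0 α hσ hα x y z 1 2 3] at h
  -- initial algebra side
  have hg : ∀ i : Fin (S.rk σ0), 1 < (i : ℕ) →
      (mkM S B σ0 x y z 1 2 3).h (t1T σ0 α hα) (dvec 2 3 i) = 1 := by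
    intro i hi
    have hd : dvec (2 : Fin 5) 3 i = 0 := by
      have h0 : (i : ℕ) ≠ 0 := by omega
      have h1 : (i : ℕ) ≠ 1 := by omega
      simp [dvec, h0, h1]
    rw [hd]
    exact h_t1_0 σ0 α hσ hα x y z 1 2 3
  rw [list_prod_eq_first_two hσ2 _ hg] at h
  have hd20 : dvec (2 : Fin 5) 3 (⟨0, by omega⟩ : Fin (S.rk σ0)) = 2 := by simp [dvec]
  have hd21 : dvec (2 : Fin 5) 3 (⟨1, by omega⟩ : Fin (S.rk σ0)) = 3 := by simp [dvec]
  rw [hd20, hd21, h_t1_2 σ0 α hσ hα x y z 1 2 3, h_t1_3 σ0 α hσ hα x y z 1 2 3] at h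
  -- run side
  have hj1 : (1 : ℕ) < S.rk σ0 := by omega
  have hxy : ((3 : Fin 5), fun _ : Fin (S.rk σ0) => (0 : Fin 5))
      ≠ ((3 : Fin 5), fun _ : Fin (S.rk σ0) => (1 : Fin 5)) := by
    intro hh
    have := congrFun (congrArg Prod.snd hh) ⟨0, by omega⟩
    simp at this
  have hW : ∀ i : Fin (S.rk σ0), i ≠ ⟨1, hj1⟩ →
      ∀ a : Fin 5 × (Fin (S.rk σ0) → Fin 5),
        a ≠ (dvec 2 3 i, fun _ => (0 : Fin 5)) → Wfun x y z 1 2 3 i a = 0 := by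
    intro i hij a ha
    have hvi : (i : ℕ) ≠ 1 := fun hh => hij (Fin.ext hh)
    simp only [Wfun]
    by_cases h1 : a.1 = dvec 2 3 i
    · rw [if_pos h1]
      apply Ufun_zero
      rw [h1]
      by_cases h0 : (i : ℕ) = 0
      · have hd : dvec (2 : Fin 5) 3 i = 2 := by simp [dvec, h0]
        rw [hd, tbl_r2, if_neg (fun hh => ha (Prod.ext h1 (funext hh)))]
      · have hd : dvec (2 : Fin 5) 3 i = 0 := by simp [dvec, h0, hvi]
        rw [hd, tbl_r0, if_neg (fun hh => ha (Prod.ext h1 (funext hh)))]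
    · rw [if_neg h1]
  have hd23 : dvec (2 : Fin 5) 3 (⟨1, hj1⟩ : Fin (S.rk σ0)) = 3 := by simp [dvec]
  have hWj : ∀ a : Fin 5 × (Fin (S.rk σ0) → Fin 5),
      a ≠ ((3 : Fin 5), fun _ => (0 : Fin 5)) →
      a ≠ ((3 : Fin 5), fun _ => (1 : Fin 5)) →
      Wfun x y z 1 2 3 (⟨1, hj1⟩ : Fin (S.rk σ0)) a = 0 := by
    intro a ha0 ha1
    simp only [Wfun, hd23]
    by_cases h1 : a.1 = 3
    · rw [if_pos h1]
      apply Ufun_zero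
      rw [h1, tbl_r3, if_neg (fun hh => ha0 (Prod.ext h1 (funext hh))),
        if_neg (fun hh => ha1 (Prod.ext h1 (funext hh)))]
    · rw [if_neg h1]
  rw [sum_pi_prod_two (Wfun x y z 1 2 3) 1 (⟨1, hj1⟩ : Fin (S.rk σ0))
    (fun i => (dvec 2 3 i, fun _ => (0 : Fin 5)))
    ((3 : Fin 5), fun _ => (0 : Fin 5)) ((3 : Fin 5), fun _ => (1 : Fin 5))
    hxy hW hWj] at h
  have hval : ∀ w : Fin 5 × (Fin (S.rk σ0) → Fin 5),
      ((List.finRange (S.rk σ0)).map (fun i => Wfun x y z 1 2 3 i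
        (if i = (⟨1, hj1⟩ : Fin (S.rk σ0)) then w
          else (dvec 2 3 i, fun _ => (0 : Fin 5))))).prod
      = x * Wfun x y z 1 2 3 (⟨1, hj1⟩ : Fin (S.rk σ0)) w := by
    intro w
    have hfun : (fun i => Wfun x y z 1 2 3 i
        (if i = (⟨1, hj1⟩ : Fin (S.rk σ0)) then w
          else (dvec 2 3 i, fun _ => (0 : Fin 5))))
        = fun i : Fin (S.rk σ0) => if (i : ℕ) = 0 then x
            else if (i : ℕ) = 1 then Wfun x y z 1 2 3 (⟨1, hj1⟩ : Fin (S.rk σ0)) w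
            else 1 := by
      funext i
      by_cases h0 : (i : ℕ) = 0
      · have hij : i ≠ (⟨1, hj1⟩ : Fin (S.rk σ0)) := fun hh => by
          rw [hh] at h0
          simp at h0
        rw [if_neg hij]
        have hd : dvec (2 : Fin 5) 3 i = 2 := by simp [dvec, h0]
        simp only [Wfun, hd]
        rw [if_pos trivial, Ufun_eval0, tbl_r2, if_pos (fun _ => rfl), if_pos h0]
      · by_cases h1 : (i : ℕ) = 1
        · have hij : i = (⟨1, hj1⟩ : Fin (S.rk σ0)) := Fin.ext h1
          rw [if_pos hij, hij, if_neg (by simp), if_pos rfl]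
        · have hij : i ≠ (⟨1, hj1⟩ : Fin (S.rk σ0)) := fun hh => by
            rw [hh] at h1
            simp at h1
          rw [if_neg hij]
          have hd : dvec (2 : Fin 5) 3 i = 0 := by simp [dvec, h0, h1]
          simp only [Wfun, hd]
          rw [if_pos trivial, Ufun_eval0, tbl_r0, if_pos (fun _ => rfl), if_neg h0, if_neg h1]
    rw [hfun, list_prod_eq_first_two hσ2]
    · rw [if_pos rfl, if_neg (by simp), if_pos rfl]
    · intro i hi
      rw [if_neg (by omega), if_neg (by omega)]
  rw [hval, hval] at h
  have hX : Wfun x y z 1 2 3 (⟨1, hj1⟩ : Fin (S.rk σ0))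
      ((3 : Fin 5), fun _ => (0 : Fin 5)) = y := by
    simp only [Wfun, hd23]
    rw [if_pos trivial, Ufun_eval0, tbl_r3, if_pos (fun _ => rfl)]
  have hY : Wfun x y z 1 2 3 (⟨1, hj1⟩ : Fin (S.rk σ0))
      ((3 : Fin 5), fun _ => (1 : Fin 5)) = z := by
    simp only [Wfun, hd23]
    rw [if_pos trivial, Ufun_eval1, tbl_r3,
      if_neg (fun hh => by simpa using hh ⟨0, by omega⟩), if_pos (fun _ => rfl)]
  rw [hX, hY, mul_one, mul_one, mul_one] at h
  exact h.symm

end Infra7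

/-- The run semantics and the initial algebra semantics coincide for all wta over `Σ`
and `B` iff: `B` is right-distributive whenever `Σ` has a symbol of rank ≥ 1, and `B` is
left-distributive whenever `Σ` has a symbol of rank ≥ 2. In particular, if `B` is a
semiring then both semantics coincide for every wta. -/
theorem statement6 (S : RankedAlphabet) (B : Type) [StrongBimonoid B] :
    ((((∃ σ, S.rk σ ≠ 0) → SBRightDistributive B) ∧
      ((∃ σ, 2 ≤ S.rk σ) → SBLeftDistributive B)) ↔
      (∀ M : WTA S B, M.runSem = M.initSem)) ∧
    (SBLeftDistributive B → SBRightDistributive B →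
      ∀ M : WTA S B, M.initSem = M.runSem) := by
  constructor
  · constructor
    · rintro ⟨hr, hl⟩ M
      funext t
      exact WTA.forward hr hl M t
    · intro H
      constructor
      · rintro ⟨σ, hs⟩
        exact backward_right H σ hs
      · rintro ⟨σ, hs⟩
        exact backward_left H σ hs
  · intro hl hr M
    funext t
    exact (WTA.forward (fun _ => hr) (fun _ => hl) M t).symm
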